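/- Let (S, dist_S) and (A, dist_A) be metric spaces with their Borel σ-algebras. Let p : S → A → ProbabilityMeasure S be a measurable Markov kernel satisfying the dual Wasserstein-Lipschitz condition: for all (s,a), (s',a') ∈ S×A and every bounded 1-Lipschitz function f : S → ℝ, |∫ f d p(s,a) − ∫ f d p(s',a')| ≤ L_P (dist_S(s,s') + dist_A(a,a')). Let π : S → ProbabilityMeasure A be a measurable policy satisfying: for all s, z ∈ S and every bounded 1-Lipschitz function h : A → ℝ, |∫ h d π(s) − ∫ h d π(z)| ≤ L_π dist_S(s,z). Then for every bounded 1-Lipschitz function f : S → ℝ, the function g(s) := ∫_A (∫_S f(s') d p(s,a)(s')) d π(s)(a) satisfies |g(s) − g(z)| ≤ L_P (1 + L_π) dist_S(s,z) for all s, z ∈ S. -/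

import Mathlib

open MeasureTheory

/-- **Proposition (lip_g).** The one-step expectation operator of an `L_P`-Lipschitz
(in the Wasserstein sense, dual form) Markov kernel under an `L_π`-Lipschitz policy maps
bounded 1-Lipschitz functions to `L_P (1 + L_π)`-Lipschitz functions. -/
theorem lip_g {S A : Type*} [MetricSpace S] [MeasurableSpace S] [BorelSpace S]
    [MetricSpace A] [MeasurableSpace A] [BorelSpace A]
    (p : S → A → Measure S) (hp_prob : ∀ s a, IsProbabilityMeasure (p s a))
    (hp_meas : Measurable fun q : S × A => p q.1 q.2)
    (π : S → Measure A) (hπ_prob : ∀ s, IsProbabilityMeasure (π s))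
    (hπ_meas : Measurable π)
    (L_P L_π : ℝ)
    (hp_lip : ∀ (s s' : S) (a a' : A), ∀ f : S → ℝ, LipschitzWith 1 f →
      (∃ M, ∀ y, |f y| ≤ M) →
      |(∫ y, f y ∂(p s a)) - ∫ y, f y ∂(p s' a')| ≤ L_P * (dist s s' + dist a a'))
    (hπ_lip : ∀ s z : S, ∀ h : A → ℝ, LipschitzWith 1 h → (∃ M, ∀ a, |h a| ≤ M) →
      |(∫ a, h a ∂(π s)) - ∫ a, h a ∂(π z)| ≤ L_π * dist s z) :
    ∀ f : S → ℝ, LipschitzWith 1 f → (∃ M, ∀ y, |f y| ≤ M) →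
      ∀ s z : S,
        |(∫ a, ∫ s', f s' ∂(p s a) ∂(π s)) - ∫ a, ∫ s', f s' ∂(p z a) ∂(π z)| ≤
          L_P * (1 + L_π) * dist s z := by
  intro f hf hfb s z
  rcases eq_or_ne s z with rfl | hsz
  · simp
  obtain ⟨M, hM⟩ := hfb
  have hdpos : 0 < dist s z := dist_pos.mpr hsz
  haveI := hπ_prob s
  haveI : Nonempty A := Measure.nonempty_of_neZero (π s)
  obtain ⟨a₀⟩ := ‹Nonempty A›
  set κ : ProbabilityTheory.Kernel (S × A) S := ⟨fun q => p q.1 q.2, hp_meas⟩ with hκ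
  haveI : ProbabilityTheory.IsMarkovKernel κ := ⟨fun q => hp_prob q.1 q.2⟩
  set F : S × A → ℝ := fun q => ∫ y, f y ∂(p q.1 q.2) with hF
  have hFmeas : StronglyMeasurable F :=
    StronglyMeasurable.integral_kernel_prod_right' (κ := κ)
      ((hf.continuous.stronglyMeasurable).comp_measurable measurable_snd)
  have hFbound : ∀ q, |F q| ≤ M := fun q => by
    haveI := hp_prob q.1 q.2
    calc |F q| = ‖∫ y, f y ∂(p q.1 q.2)‖ := rfl
      _ ≤ M * (p q.1 q.2 Set.univ).toReal :=
          norm_integral_le_of_norm_le_const (by filter_upwards with y; simpa using hM y)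
      _ = M := by simp
  have hFlipS : ∀ (s' z' : S) (a : A), |F (s', a) - F (z', a)| ≤ L_P * dist s' z' := by
    intro s' z' a
    simpa using hp_lip s' z' a a f hf ⟨M, hM⟩
  have hFlipA : ∀ (z' : S) (a a' : A), |F (z', a) - F (z', a')| ≤ L_P * dist a a' := by
    intro z' a a'
    simpa using hp_lip z' z' a a' f hf ⟨M, hM⟩
  have hLP : 0 ≤ L_P := by
    have h := hFlipS s z a₀
    nlinarith [abs_nonneg (F (s, a₀) - F (z, a₀))]
  -- integrability
  have hint : ∀ (s' z' : S), Integrable (fun a => F (z', a)) (π s') := by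
    intro s' z'
    haveI := hπ_prob s'
    refine ⟨(hFmeas.comp_measurable measurable_prodMk_left).aestronglyMeasurable, ?_⟩
    exact HasFiniteIntegral.of_bounded (C := M)
      (Filter.Eventually.of_forall fun a => by simpa using hFbound (z', a))
  -- term 1
  have h1 : |(∫ a, F (s, a) ∂(π s)) - ∫ a, F (z, a) ∂(π s)| ≤ L_P * dist s z := by
    rw [← integral_sub (hint s s) (hint s z)]
    calc ‖∫ a, (F (s, a) - F (z, a)) ∂(π s)‖ ≤ (L_P * dist s z) * (π s Set.univ).toReal :=
          norm_integral_le_of_norm_le_const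
            (Filter.Eventually.of_forall fun a => by simpa using hFlipS s z a)
      _ = L_P * dist s z := by simp
  -- term 2
  have h2 : |(∫ a, F (z, a) ∂(π s)) - ∫ a, F (z, a) ∂(π z)| ≤ L_P * L_π * dist s z := by
    rcases eq_or_lt_of_le hLP with hLP0 | hLP0
    · -- L_P = 0 : F (z, ·) is constant
      have hconst : ∀ a, F (z, a) = F (z, a₀) := by
        intro a
        have := hFlipA z a a₀
        rw [← hLP0] at this
        simp only [zero_mul] at this
        have := abs_nonpos_iff.mp (le_trans this le_rfl)
        linarith [sub_eq_zero.mp this]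
      simp only [hconst]
      haveI := hπ_prob z
      rw [integral_const, integral_const]
      simp [← hLP0]
    · -- L_P > 0 : rescale
      set h : A → ℝ := fun a => F (z, a) / L_P with hh
      have hhl : LipschitzWith 1 h := by
        refine LipschitzWith.of_dist_le_mul fun a a' => ?_
        simp only [NNReal.coe_one, one_mul]
        rw [Real.dist_eq]
        have : |F (z, a) - F (z, a')| ≤ L_P * dist a a' := hFlipA z a a'
        rw [hh]
        rw [div_sub_div_same, abs_div, abs_of_pos hLP0, div_le_iff₀ hLP0]
        linarith [this]
      have hhb : ∃ M', ∀ a, |h a| ≤ M' := by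
        refine ⟨M / L_P, fun a => ?_⟩
        rw [hh, abs_div, abs_of_pos hLP0]
        gcongr
        exact hFbound (z, a)
      have := hπ_lip s z h hhl hhb
      have heq : ∀ s' : S, (∫ a, F (z, a) ∂(π s')) = L_P * ∫ a, h a ∂(π s') := by
        intro s'
        rw [← integral_const_mul]
        congr 1
        ext a
        simp only [hh]; rw [mul_div_assoc', eq_div_iff hLP0.ne', mul_comm]
      rw [heq s, heq z, ← mul_sub, abs_mul, abs_of_pos hLP0, mul_assoc]
      exact mul_le_mul_of_nonneg_left this hLP0.le
  calc |(∫ a, ∫ s', f s' ∂(p s a) ∂(π s)) - ∫ a, ∫ s', f s' ∂(p z a) ∂(π z)|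
      = |((∫ a, F (s, a) ∂(π s)) - ∫ a, F (z, a) ∂(π s)) +
          ((∫ a, F (z, a) ∂(π s)) - ∫ a, F (z, a) ∂(π z))| := by ring_nf; rfl
    _ ≤ |(∫ a, F (s, a) ∂(π s)) - ∫ a, F (z, a) ∂(π s)| +
          |(∫ a, F (z, a) ∂(π s)) - ∫ a, F (z, a) ∂(π z)| := abs_add_le _ _
    _ ≤ L_P * dist s z + L_P * L_π * dist s z := add_le_add h1 h2
    _ = L_P * (1 + L_π) * dist s z := by ring
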